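/- Let n ≥ 3 be an integer. Then the automorphism group of the dihedral group D_{2^n} of order 2^n (Mathlib's DihedralGroup 2^{n-1}) has cardinality 2^{2n-3}. -/

import Mathlib

open DihedralGroup

namespace DihedralAux

variable {m : ℕ}

theorem r_pow (i : ZMod m) (k : ℕ) : (r i : DihedralGroup m) ^ k = r ((k : ZMod m) * i) := by
  induction k with
  | zero => simp
  | succ k ih => rw [pow_succ, ih, r_mul_r]; push_cast; ring_nf

theorem r_eq_pow [NeZero m] (i : ZMod m) : (r i : DihedralGroup m) = (r 1) ^ i.val := by
  rw [r_pow, mul_one, ZMod.natCast_zmod_val]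

/-- The automorphism of the dihedral group sending `r i ↦ r (a i)`, `sr i ↦ sr (a i + b)`. -/
def phi (a : (ZMod m)ˣ) (b : ZMod m) : DihedralGroup m ≃* DihedralGroup m where
  toFun x := match x with
    | r i => r (a * i)
    | sr i => sr (a * i + b)
  invFun x := match x with
    | r i => r ((a⁻¹ : (ZMod m)ˣ) * i)
    | sr i => sr ((a⁻¹ : (ZMod m)ˣ) * (i - b))
  left_inv := by
    rintro (i | i) <;> simp [← mul_assoc, ← Units.val_mul]
  right_inv := by
    rintro (i | i) <;> simp [← mul_assoc, ← Units.val_mul, mul_sub]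
  map_mul' := by
    rintro (i | i) (j | j) <;> simp <;> ring

@[simp] theorem phi_r (a : (ZMod m)ˣ) (b i : ZMod m) : phi a b (r i) = r ((a : ZMod m) * i) := rfl
@[simp] theorem phi_sr (a : (ZMod m)ˣ) (b i : ZMod m) : phi a b (sr i) = sr ((a : ZMod m) * i + b) := rfl

theorem phi_injective : Function.Injective
    (fun p : (ZMod m)ˣ × ZMod m => (phi p.1 p.2 : MulAut (DihedralGroup m))) := by
  rintro ⟨a, b⟩ ⟨a', b'⟩ h
  have h' : (phi a b : MulAut (DihedralGroup m)) = phi a' b' := h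
  have h1 : phi a b (r 1) = phi a' b' (r 1) := by rw [h']
  have h2 : phi a b (sr 0) = phi a' b' (sr 0) := by rw [h']
  simp only [phi_r, phi_sr, mul_one, mul_zero, zero_add] at h1 h2
  injection h1 with h1
  injection h2 with h2
  exact Prod.ext (Units.ext h1) h2

theorem phi_surjective (hm : 3 ≤ m) : Function.Surjective
    (fun p : (ZMod m)ˣ × ZMod m => (phi p.1 p.2 : MulAut (DihedralGroup m))) := by
  have : NeZero m := ⟨by omega⟩
  intro f
  obtain ⟨c, hc⟩ : ∃ c, f (r 1) = r c := by
    cases hfr : f (r 1) with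
    | r c => exact ⟨c, rfl⟩
    | sr c =>
      have := MulEquiv.orderOf_eq f (r 1)
      rw [hfr, orderOf_sr, orderOf_r_one] at this
      omega
  have hco : Nat.Coprime c.val m := by
    have h := MulEquiv.orderOf_eq f (r 1)
    rw [hc, orderOf_r, orderOf_r_one] at h
    have hg : Nat.gcd m c.val ∣ m := Nat.gcd_dvd_left _ _
    have hgpos : 0 < Nat.gcd m c.val := Nat.gcd_pos_of_pos_left _ (by omega)
    have hdiv := Nat.div_mul_cancel hg
    have hle := Nat.le_of_dvd (by omega : 0 < m) hg
    have : Nat.gcd m c.val = 1 := by nlinarith [Nat.div_le_self m (Nat.gcd m c.val)]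
    exact Nat.coprime_comm.mp this
  set a : (ZMod m)ˣ := ZMod.unitOfCoprime c.val hco with ha
  have hac : (a : ZMod m) = c := by
    rw [ha, ZMod.coe_unitOfCoprime, ZMod.natCast_zmod_val]
  have hfr : ∀ x : ZMod m, f (r x) = r ((a : ZMod m) * x) := by
    intro x
    rw [r_eq_pow x, map_pow, hc, r_pow, hac, ZMod.natCast_zmod_val, mul_comm]
  obtain ⟨b, hb⟩ : ∃ b, f (sr 0) = sr b := by
    cases hfs : f (sr 0) with
    | r d =>
      have : f (r ((a⁻¹ : (ZMod m)ˣ) * d)) = r d := by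
        rw [hfr, ← mul_assoc, ← Units.val_mul, mul_inv_cancel, Units.val_one, one_mul]
      have := f.injective (this.trans hfs.symm)
      exact absurd this (by simp)
    | sr b => exact ⟨b, rfl⟩
  refine ⟨⟨a, b⟩, ?_⟩
  show (phi a b : MulAut (DihedralGroup m)) = f
  ext x
  cases x with
  | r i => simp [hfr]
  | sr i =>
    have : (sr i : DihedralGroup m) = sr 0 * r i := by simp
    rw [this, map_mul, map_mul, hb, hfr]
    simp [add_comm]

theorem card_mulAut (hm : 3 ≤ m) :
    Nat.card (MulAut (DihedralGroup m)) = m * Nat.totient m := by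
  have : NeZero m := ⟨by omega⟩
  rw [← Nat.card_congr (Equiv.ofBijective _ ⟨phi_injective, phi_surjective hm⟩)]
  rw [Nat.card_prod, Nat.card_eq_fintype_card, Nat.card_eq_fintype_card,
    ZMod.card_units_eq_totient, ZMod.card, mul_comm]

end DihedralAux

/-- Proposition 3.3 (dihedral case): for `n ≥ 3`, the dihedral group of order
`2 ^ n` has exactly `2 ^ (2n - 3)` automorphisms. -/
theorem card_mulAut_dihedralGroup (n : ℕ) (hn : 3 ≤ n) :
    Nat.card (MulAut (DihedralGroup (2 ^ (n - 1)))) = 2 ^ (2 * n - 3) := by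
  rw [DihedralAux.card_mulAut (by
      calc (3:ℕ) ≤ 2 ^ 2 := by norm_num
      _ ≤ 2 ^ (n - 1) := Nat.pow_le_pow_right (by norm_num) (by omega))]
  rw [Nat.totient_prime_pow Nat.prime_two (by omega : 0 < n - 1)]
  have h1 : n - 1 - 1 = n - 2 := by omega
  rw [h1]
  norm_num
  rw [← pow_add]
  congr 1
  omega
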